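/- In the two-armed case K = 2, the quantity T̲(μ) := (sup over w ∈ Σ₂ with w₂/(w₁+w₂) = γ of min over the single alternative of f₂(w;μ))⁻¹ equals T*(μ) := (sup over w ∈ Σ₂ of f₂(w;μ))⁻¹, where f₂(w;μ) = w₁·d(μ₁, m) + w₂·d(μ₂, m) with m = (w₁μ₁+w₂μ₂)/(w₁+w₂), and γ is the unique point with d(μ₁,(1−γ)μ₁+γμ₂) = d(μ₂,(1−γ)μ₁+γμ₂). Prove this in the Gaussian case d(x,y) = (x−y)²/2: then γ = 1/2 and sup_{α∈[0,1]} [α(1−α)(μ₁−μ₂)²/2] is attained at α = 1/2, so T̲ = T* = 8/(μ₁−μ₂)². -/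
import Mathlib

/-- Two-armed Gaussian case: the equalizing proportion is γ = 1/2, the sup of
f₂ over the simplex is attained at α = 1/2, and T̲ = T* = 8/(μ₁−μ₂)². -/
theorem two_armed_gaussian_optimality
    (μ₁ μ₂ : ℝ) (h12 : μ₂ < μ₁)
    (d : ℝ → ℝ → ℝ) (hd : ∀ x y, d x y = (x - y)^2 / 2)
    (h : ℝ → ℝ)
    (hh : ∀ z, h z = (1 - z) * d μ₁ ((1 - z) * μ₁ + z * μ₂)
        + z * d μ₂ ((1 - z) * μ₁ + z * μ₂)) :
    (∀ γ ∈ Set.Ioo (0:ℝ) 1,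
      d μ₁ ((1 - γ) * μ₁ + γ * μ₂) = d μ₂ ((1 - γ) * μ₁ + γ * μ₂) → γ = 1/2)
    ∧ (∀ α ∈ Set.Icc (0:ℝ) 1, h α ≤ h (1/2))
    ∧ (h (1/2))⁻¹ = 8 / (μ₁ - μ₂)^2 := by
  have hΔ : μ₁ - μ₂ > 0 := by linarith
  refine ⟨?_, ?_, ?_⟩
  · intro γ hγ heq
    rw [hd, hd] at heq
    have h1 : γ^2 * (μ₁ - μ₂)^2 = (1 - γ)^2 * (μ₁ - μ₂)^2 := by ring_nf at heq ⊢; nlinarith [heq]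
    have : γ^2 = (1-γ)^2 := by
      have := mul_right_cancel₀ (a := γ^2) (b := (μ₁ - μ₂)^2) (c := (1-γ)^2) (by positivity) h1
      exact this
    nlinarith [hγ.1, hγ.2]
  · intro α hα
    rw [hh, hh, hd, hd, hd, hd]
    nlinarith [sq_nonneg (α - 1/2), sq_nonneg (μ₁ - μ₂), mul_nonneg (sq_nonneg (α - 1/2)) (sq_nonneg (μ₁ - μ₂))]
  · rw [hh, hd, hd]
    have : (1 - 1/2 : ℝ) * ((μ₁ - ((1 - 1/2) * μ₁ + 1/2 * μ₂))^2 / 2)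
        + (1/2 : ℝ) * ((μ₂ - ((1 - 1/2) * μ₁ + 1/2 * μ₂))^2 / 2) = (μ₁ - μ₂)^2 / 8 := by ring
    rw [this]
    rw [inv_div]
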